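/- For the 6×6 matrix H(g,g;z) (the matrix H(g,h;z) of the loop-graph model with h = g), the diagonal matrix Θ with entries Θ₁₁ = Θ₆₆ = (1-g)(1-z)/(1+z) [equivalently ((1+g)-(1+g)g)(1-z)/((1+g)(1+z))], Θ₂₂ = Θ₅₅ = 1-g, Θ₃₃ = Θ₄₄ = 1+g, satisfies the Dieudonné hidden-Hermiticity relation Hᵀ = Θ·H·Θ⁻¹, provided g ≠ ±1 and z ≠ ±1. -/
import Mathlib


open Matrix

private lemma vec6_zero {α : Type*} (a b c d e f : α) : ![a,b,c,d,e,f] 0 = a := rfl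
private lemma vec6_one {α : Type*} (a b c d e f : α) : ![a,b,c,d,e,f] 1 = b := rfl
private lemma vec6_two {α : Type*} (a b c d e f : α) : ![a,b,c,d,e,f] 2 = c := rfl
private lemma vec6_three {α : Type*} (a b c d e f : α) : ![a,b,c,d,e,f] 3 = d := rfl
private lemma vec6_four {α : Type*} (a b c d e f : α) : ![a,b,c,d,e,f] 4 = e := rfl
private lemma vec6_five {α : Type*} (a b c d e f : α) : ![a,b,c,d,e,f] 5 = f := rfl

set_option maxHeartbeats 1600000 in
theorem stmt2 (g z : ℝ) (hg1 : g ≠ 1) (hg2 : g ≠ -1) (hz1 : z ≠ 1) (hz2 : z ≠ -1) :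
    let H : Matrix (Fin 6) (Fin 6) ℝ :=
      !![2, -1-z, 0, 0, 0, 0;
         -1+z, 3, -1-g, -1-g, 0, 0;
         0, -1+g, 2, 0, -1+g, 0;
         0, -1+g, 0, 2, -1+g, 0;
         0, 0, -1-g, -1-g, 3, -1+z;
         0, 0, 0, 0, -1-z, 2]
    let Θ : Matrix (Fin 6) (Fin 6) ℝ :=
      Matrix.diagonal ![(1-g)*(1-z)/(1+z), 1-g, 1+g, 1+g, 1-g, (1-g)*(1-z)/(1+z)]
    Hᵀ = Θ * H * Θ⁻¹ := by
  intro H Θ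
  have hg1' : (1:ℝ) - g ≠ 0 := by intro h; apply hg1; linarith
  have hg2' : (1:ℝ) + g ≠ 0 := by intro h; apply hg2; linarith
  have hz1' : (1:ℝ) - z ≠ 0 := by intro h; apply hz1; linarith
  have hz2' : (1:ℝ) + z ≠ 0 := by intro h; apply hz2; linarith
  have hdet : IsUnit Θ.det := by
    rw [isUnit_iff_ne_zero, Matrix.det_diagonal, Finset.prod_ne_zero_iff]
    intro i _
    fin_cases i <;>
      first
        | exact div_ne_zero (mul_ne_zero hg1' hz1') hz2'
        | exact hg1'
        | exact hg2'
  have key : Hᵀ * Θ = Θ * H := by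
    ext i j
    simp only [Θ, Matrix.mul_diagonal, Matrix.diagonal_mul, Matrix.transpose_apply]
    fin_cases i <;> fin_cases j <;>
      simp [H] <;>
      (try simp only [show (5:Fin 6) = Fin.succ 4 from rfl, show (4:Fin 5) = Fin.succ 3 from rfl,
        show (3:Fin 4) = Fin.succ 2 from rfl, show (2:Fin 3) = Fin.succ 1 from rfl,
        show (1:Fin 2) = Fin.succ 0 from rfl, Matrix.cons_val_succ, Matrix.cons_val_zero,
        Matrix.vecHead, Matrix.vecTail, Function.comp]) <;>
      norm_num <;>
      first
        | ring1
        | (field_simp; ring)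
  calc Hᵀ = Hᵀ * Θ * Θ⁻¹ := (Matrix.mul_nonsing_inv_cancel_right Θ Hᵀ hdet).symm
    _ = Θ * H * Θ⁻¹ := by rw [key]
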